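/- Let f(t) = a + b(t−1) + c(t−1)² + d(t−1)²/t + ∫_{(0,∞)} (t−1)²/(t+s) dμ(s) for t ∈ (0,∞), where a,b ∈ ℝ, c,d ≥ 0 and μ is a positive measure on (0,∞) with ∫ 1/(1+s) dμ(s) < ∞. Then f(0⁺) = a − b + c + (+∞)·d + ∫_{(0,∞)} s^{-1} dμ(s) and f'(∞) = b + (+∞)·c + d + ∫_{(0,∞)} dμ(s), as elements of (-∞,+∞] (with (+∞)·0 = 0). -/

import Mathlib

open MeasureTheory Set Filter ENNReal Topology


section IRBVAux

variable {μ : Measure ℝ}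

lemma irbv_ae_pos (hsupp : μ (Set.Iic 0) = 0) : ∀ᵐ s ∂μ, 0 < s := by
  rw [ae_iff]
  convert hsupp using 2
  ext s; simp [not_lt]

lemma irbv_meas (t : ℝ) : Measurable fun s : ℝ => (t - 1) ^ 2 / (t + s) :=
  measurable_const.div (measurable_const.add measurable_id)

lemma irbv_one_add_meas : Measurable fun s : ℝ => 1 / (1 + s) :=
  measurable_const.div (measurable_const.add measurable_id)

lemma irbv_bound {t s : ℝ} (ht : 0 < t) (hs : 0 < s) :
    (t - 1) ^ 2 / (t + s) ≤ ((t - 1) ^ 2 * (1 + t⁻¹)) * (1 / (1 + s)) := by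
  have hti : 0 < t⁻¹ := inv_pos.mpr ht
  have h1 : 1 / (t + s) ≤ (1 + t⁻¹) / (1 + s) := by
    rw [div_le_div_iff₀ (by positivity) (by positivity)]
    have h2 : t⁻¹ * t = 1 := inv_mul_cancel₀ ht.ne'
    nlinarith [mul_pos hti hs]
  calc (t - 1) ^ 2 / (t + s) = (t - 1) ^ 2 * (1 / (t + s)) := by rw [mul_one_div]
    _ ≤ (t - 1) ^ 2 * ((1 + t⁻¹) / (1 + s)) :=
        mul_le_mul_of_nonneg_left h1 (by positivity)
    _ = ((t - 1) ^ 2 * (1 + t⁻¹)) * (1 / (1 + s)) := by ring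

lemma irbv_int_one_add (hsupp : μ (Set.Iic 0) = 0)
    (hμ : (∫⁻ s, ENNReal.ofReal (1 / (1 + s)) ∂μ) < ⊤) :
    Integrable (fun s : ℝ => 1 / (1 + s)) μ := by
  have hpos : 0 ≤ᶠ[ae μ] fun s : ℝ => 1 / (1 + s) :=
    (irbv_ae_pos hsupp).mono fun s hs => by positivity
  exact ⟨irbv_one_add_meas.aestronglyMeasurable,
    (hasFiniteIntegral_iff_ofReal hpos).mpr hμ⟩

lemma irbv_integrable (hsupp : μ (Set.Iic 0) = 0)
    (hμ : (∫⁻ s, ENNReal.ofReal (1 / (1 + s)) ∂μ) < ⊤) {t : ℝ} (ht : 0 < t) :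
    Integrable (fun s : ℝ => (t - 1) ^ 2 / (t + s)) μ := by
  have hg : Integrable (fun s : ℝ => ((t - 1) ^ 2 * (1 + t⁻¹)) * (1 / (1 + s))) μ :=
    (irbv_int_one_add hsupp hμ).const_mul _
  refine hg.mono' (irbv_meas t).aestronglyMeasurable ?_
  filter_upwards [irbv_ae_pos hsupp] with s hs
  rw [Real.norm_eq_abs, abs_of_nonneg (by positivity)]
  exact irbv_bound ht hs

lemma irbv_finite_Ioc (hμ : (∫⁻ s, ENNReal.ofReal (1 / (1 + s)) ∂μ) < ⊤)
    {R : ℝ} (hR : 0 ≤ R) : μ (Set.Ioc 0 R) < ⊤ := by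
  have key : ENNReal.ofReal (1 / (1 + R)) * μ (Set.Ioc 0 R)
      ≤ ∫⁻ s, ENNReal.ofReal (1 / (1 + s)) ∂μ := by
    rw [← setLIntegral_const]
    refine le_trans (setLIntegral_mono
      (ENNReal.measurable_ofReal.comp irbv_one_add_meas) fun x hx => ?_)
      (setLIntegral_le_lintegral _ _)
    exact ENNReal.ofReal_le_ofReal
      (by apply div_le_div₀ zero_le_one le_rfl (by linarith [hx.1]) (by linarith [hx.2]))
  rcases eq_top_or_lt_top (μ (Set.Ioc 0 R)) with h | h
  · rw [h, ENNReal.mul_top (ENNReal.ofReal_pos.mpr (by positivity)).ne'] at key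
    exact absurd (top_le_iff.mp key) hμ.ne
  · exact h

lemma irbv_I_eq (hsupp : μ (Set.Iic 0) = 0) {t : ℝ} (ht : 0 < t) :
    ∫ s, (t - 1) ^ 2 / (t + s) ∂μ
      = (∫⁻ s, ENNReal.ofReal ((t - 1) ^ 2 / (t + s)) ∂μ).toReal :=
  integral_eq_lintegral_of_nonneg_ae
    ((irbv_ae_pos hsupp).mono fun s hs => by positivity)
    (irbv_meas t).aestronglyMeasurable

lemma irbv_I_nonneg (hsupp : μ (Set.Iic 0) = 0) {t : ℝ} (ht : 0 < t) :
    0 ≤ ∫ s, (t - 1) ^ 2 / (t + s) ∂μ :=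
  integral_nonneg_of_ae ((irbv_ae_pos hsupp).mono fun s hs => by positivity)

lemma irbv_ereal_top {g : ℝ → ℝ} {l : Filter ℝ} (h : ∀ M : ℝ, ∀ᶠ t in l, M < g t) :
    Tendsto (fun t => (g t : EReal)) l (𝓝 ⊤) := by
  rw [EReal.tendsto_nhds_top_iff_real]
  intro x
  filter_upwards [h x] with t ht
  exact_mod_cast ht

lemma irbv_isup_min (x : ℝ≥0∞) (hx : x ≠ ⊤) : ⨆ n : ℕ, min x (n : ℝ≥0∞) = x := by
  apply le_antisymm (iSup_le fun n => min_le_left _ _)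
  obtain ⟨n, hn⟩ := ENNReal.exists_nat_gt hx
  exact le_iSup_of_le n (le_of_eq (min_eq_left hn.le).symm)

lemma irbv_key_ineq {t s : ℝ} (n : ℕ) (ht0 : 0 < t) (ht2 : t ≤ 1 / 2)
    (htn : t < 1 / ((n : ℝ) + 1)) (hs0 : 0 < s) (hs1 : s ≤ 1) :
    (1 / 8) * min s⁻¹ (n : ℝ) ≤ (t - 1) ^ 2 / (t + s) := by
  have h4 : (1 : ℝ) / 4 ≤ (t - 1) ^ 2 := by nlinarith
  have h2 : min s⁻¹ (n : ℝ) ≤ 2 * (1 / (t + s)) := by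
    rcases le_total s⁻¹ (n : ℝ) with h | h
    · rw [min_eq_left h]
      have hn0 : 0 < (n : ℝ) := lt_of_lt_of_le (inv_pos.mpr hs0) h
      have hsn : 1 / (n : ℝ) ≤ s := by
        rw [div_le_iff₀ hn0]
        calc (1 : ℝ) = s * s⁻¹ := (mul_inv_cancel₀ hs0.ne').symm
          _ ≤ s * n := mul_le_mul_of_nonneg_left h hs0.le
          _ = s * n := rfl
      have hts : t ≤ s := by
        have : (1 : ℝ) / (n + 1) ≤ 1 / n := by
          apply div_le_div₀ zero_le_one le_rfl hn0 (by linarith)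
        linarith
      rw [inv_eq_one_div, mul_one_div, div_le_div_iff₀ hs0 (by linarith)]
      linarith
    · rw [min_eq_right h]
      have hns : (n : ℝ) * s ≤ 1 := by
        calc (n : ℝ) * s ≤ s⁻¹ * s := mul_le_mul_of_nonneg_right h hs0.le
          _ = 1 := inv_mul_cancel₀ hs0.ne'
      have hnt : (n : ℝ) * t ≤ 1 := by
        have h1 : t * ((n : ℝ) + 1) < 1 := (lt_div_iff₀ (by positivity)).mp htn
        nlinarith
      rw [mul_one_div, le_div_iff₀ (by linarith)]
      nlinarith
  calc (1 / 8) * min s⁻¹ (n : ℝ) ≤ (1 / 8) * (2 * (1 / (t + s))) :=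
        mul_le_mul_of_nonneg_left h2 (by norm_num)
    _ = (1 / 4) * (1 / (t + s)) := by ring
    _ ≤ (t - 1) ^ 2 * (1 / (t + s)) := mul_le_mul_of_nonneg_right h4 (by positivity)
    _ = (t - 1) ^ 2 / (t + s) := by rw [mul_one_div]

end IRBVAux
lemma irbv_part1 (a b c d : ℝ) (hd : 0 ≤ d)
    (μ : Measure ℝ) (hsupp : μ (Set.Iic 0) = 0)
    (hμ : (∫⁻ s, ENNReal.ofReal (1 / (1 + s)) ∂μ) < ⊤)
    (f : ℝ → ℝ)
    (hf : ∀ t ∈ Set.Ioi (0 : ℝ),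
      f t = a + b * (t - 1) + c * (t - 1) ^ 2 + d * ((t - 1) ^ 2 / t)
        + ∫ s, (t - 1) ^ 2 / (t + s) ∂μ) :
    Tendsto (fun t : ℝ => (f t : EReal)) (nhdsWithin 0 (Set.Ioi 0))
      (nhds (((a - b + c : ℝ) : EReal) + (⊤ : EReal) * ((d : ℝ) : EReal)
        + ((∫⁻ s, ENNReal.ofReal s⁻¹ ∂μ : ℝ≥0∞) : EReal))) := by
  have hg : Tendsto (fun t : ℝ => a + b * (t - 1) + c * (t - 1) ^ 2) (𝓝[>] (0:ℝ))
      (𝓝 (a - b + c)) := by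
    have hc : ContinuousAt (fun t : ℝ => a + b * (t - 1) + c * (t - 1) ^ 2) 0 := by fun_prop
    have h : Tendsto (fun t : ℝ => a + b * (t - 1) + c * (t - 1) ^ 2) (𝓝[>] (0:ℝ))
        (𝓝 (a + b * ((0:ℝ) - 1) + c * ((0:ℝ) - 1) ^ 2)) :=
      hc.tendsto.mono_left nhdsWithin_le_nhds
    convert h using 2
    ring
  rcases eq_top_or_lt_top (∫⁻ s, ENNReal.ofReal s⁻¹ ∂μ) with hLtop | hLfin
  · -- infinite case from the measure
    have htarget : (((a - b + c : ℝ) : EReal) + (⊤ : EReal) * ((d : ℝ) : EReal)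
        + ((∫⁻ s, ENNReal.ofReal s⁻¹ ∂μ : ℝ≥0∞) : EReal)) = ⊤ := by
      rw [hLtop, EReal.coe_ennreal_top]
      apply EReal.add_top_of_ne_bot
      rcases hd.lt_or_eq with h | h
      · rw [EReal.top_mul_of_pos (by exact_mod_cast h), EReal.coe_add_top]
        simp
      · rw [← h, EReal.coe_zero, mul_zero, add_zero]
        exact EReal.coe_ne_bot _
    rw [htarget]
    apply irbv_ereal_top
    have hIoc1 : μ (Set.Ioc 0 1) < ⊤ := irbv_finite_Ioc hμ zero_le_one
    have hsplit : ∫⁻ s in Set.Ioc 0 1, ENNReal.ofReal s⁻¹ ∂μ = ⊤ := by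
      by_contra hne
      have hcompl : ∫⁻ s in (Set.Ioc 0 1)ᶜ, ENNReal.ofReal s⁻¹ ∂μ < ⊤ := by
        have hb : ∫⁻ s in (Set.Ioc 0 1)ᶜ, ENNReal.ofReal s⁻¹ ∂μ
            ≤ ∫⁻ s, ENNReal.ofReal (2 * (1 / (1 + s))) ∂μ := by
          refine le_trans (setLIntegral_mono
            (ENNReal.measurable_ofReal.comp (measurable_const.mul irbv_one_add_meas))
            fun x hx => ?_) (setLIntegral_le_lintegral _ _)
          rcases le_or_gt x 0 with hx0 | hx0
          · rw [ENNReal.ofReal_of_nonpos (inv_nonpos.mpr hx0)]; exact zero_le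
          · simp only [Set.mem_compl_iff, Set.mem_Ioc, not_and, not_le] at hx
            have hx1 : 1 < x := hx hx0
            show ENNReal.ofReal x⁻¹ ≤ ENNReal.ofReal (2 * (1 / (1 + x)))
            apply ENNReal.ofReal_le_ofReal
            have h2 : (0:ℝ) < 1 + x := by linarith
            rw [inv_eq_one_div, show 2 * (1/(1+x)) = 2/(1+x) from by ring,
              div_le_div_iff₀ hx0 h2]
            linarith
        refine lt_of_le_of_lt hb ?_
        calc ∫⁻ s, ENNReal.ofReal (2 * (1 / (1 + s))) ∂μ
            = ENNReal.ofReal 2 * ∫⁻ s, ENNReal.ofReal (1 / (1 + s)) ∂μ := by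
              simp_rw [ENNReal.ofReal_mul (by norm_num : (0:ℝ) ≤ 2)]
              have hm : Measurable fun s : ℝ => ENNReal.ofReal (1 / (1 + s)) :=
                ENNReal.measurable_ofReal.comp irbv_one_add_meas
              rw [lintegral_const_mul _ hm]
          _ < ⊤ := ENNReal.mul_lt_top ENNReal.ofReal_lt_top hμ
      have hsum := lintegral_add_compl (μ := μ) (fun s : ℝ => ENNReal.ofReal s⁻¹)
        (measurableSet_Ioc (a := (0:ℝ)) (b := 1))
      rw [hLtop] at hsum
      rcases ENNReal.add_eq_top.mp hsum with h | h
      · exact hne h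
      · exact hcompl.ne h
    have hmeasmin : ∀ n : ℕ, Measurable fun s : ℝ => min (ENNReal.ofReal s⁻¹) (n : ℝ≥0∞) :=
      fun n => (ENNReal.measurable_ofReal.comp measurable_inv).min measurable_const
    have hsup : ⨆ n : ℕ, ∫⁻ s in Set.Ioc 0 1, min (ENNReal.ofReal s⁻¹) (n : ℝ≥0∞) ∂μ = ⊤ := by
      rw [← lintegral_iSup hmeasmin fun n m hnm s =>
        min_le_min le_rfl (by exact_mod_cast Nat.cast_le.mpr hnm)]
      rw [← hsplit]
      exact lintegral_congr fun s => irbv_isup_min _ ENNReal.ofReal_ne_top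
    intro M
    set P : ℝ := max (M - (a - b + c - 1) + 1) 1 with hPdef
    have hP0 : 0 < P := lt_of_lt_of_le one_pos (le_max_right _ _)
    obtain ⟨n, hn⟩ : ∃ n : ℕ, ENNReal.ofReal (8 * P)
        < ∫⁻ s in Set.Ioc 0 1, min (ENNReal.ofReal s⁻¹) (n : ℝ≥0∞) ∂μ := by
      rw [← lt_iSup_iff, hsup]
      exact ENNReal.ofReal_lt_top
    set δ : ℝ := min (1/2) (1/((n:ℝ)+1)) with hδdef
    have hδ0 : 0 < δ := lt_min (by norm_num) (by positivity)
    filter_upwards [Ioo_mem_nhdsGT_of_mem (show (0:ℝ) ∈ Set.Ico 0 δ from ⟨le_refl 0, hδ0⟩),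
      hg.eventually_const_lt (show a - b + c - 1 < a - b + c by linarith)] with t ht hgt
    obtain ⟨ht0, htδ⟩ := ht
    have hJ : ENNReal.ofReal P ≤ ∫⁻ s, ENNReal.ofReal ((t-1)^2/(t+s)) ∂μ := by
      have h8 : ENNReal.ofReal (1/8) * ENNReal.ofReal (8*P) = ENNReal.ofReal P := by
        rw [← ENNReal.ofReal_mul (by norm_num)]
        congr 1
        ring
      calc ENNReal.ofReal P = ENNReal.ofReal (1/8) * ENNReal.ofReal (8*P) := h8.symm
        _ ≤ ENNReal.ofReal (1/8)
            * ∫⁻ s in Set.Ioc 0 1, min (ENNReal.ofReal s⁻¹) (n : ℝ≥0∞) ∂μ :=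
            mul_le_mul_right hn.le _
        _ = ∫⁻ s in Set.Ioc 0 1,
            ENNReal.ofReal (1/8) * min (ENNReal.ofReal s⁻¹) (n : ℝ≥0∞) ∂μ :=
            (lintegral_const_mul _ (hmeasmin n)).symm
        _ ≤ ∫⁻ s in Set.Ioc 0 1, ENNReal.ofReal ((t-1)^2/(t+s)) ∂μ := by
            refine setLIntegral_mono (ENNReal.measurable_ofReal.comp (irbv_meas t))
              fun s hs => ?_
            have key := irbv_key_ineq n ht0 (htδ.le.trans (min_le_left _ _))
              (htδ.trans_le (min_le_right _ _)) hs.1 hs.2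
            calc ENNReal.ofReal (1/8) * min (ENNReal.ofReal s⁻¹) (n : ℝ≥0∞)
                = ENNReal.ofReal ((1/8) * min s⁻¹ (n:ℝ)) := by
                  rw [ENNReal.ofReal_mul (by norm_num),
                    (show ENNReal.ofReal (min s⁻¹ (n:ℝ))
                        = min (ENNReal.ofReal s⁻¹) (ENNReal.ofReal (n:ℝ)) from
                      Monotone.map_min fun _ _ h => ENNReal.ofReal_le_ofReal h),
                    ENNReal.ofReal_natCast]
              _ ≤ ENNReal.ofReal ((t-1)^2/(t+s)) := ENNReal.ofReal_le_ofReal key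
        _ ≤ ∫⁻ s, ENNReal.ofReal ((t-1)^2/(t+s)) ∂μ := setLIntegral_le_lintegral _ _
    have hIt : P ≤ ∫ s, (t-1)^2/(t+s) ∂μ := by
      rw [irbv_I_eq hsupp ht0]
      have h := ENNReal.toReal_mono (irbv_integrable hsupp hμ ht0).lintegral_lt_top.ne hJ
      rwa [ENNReal.toReal_ofReal hP0.le] at h
    rw [hf t ht0]
    have hdterm : 0 ≤ d * ((t-1)^2/t) := by positivity
    have hPge : M - (a - b + c - 1) + 1 ≤ P := le_max_left _ _
    linarith
  · rcases hd.lt_or_eq with hd0 | hd0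
    · -- d > 0
      have htarget : (((a - b + c : ℝ) : EReal) + (⊤ : EReal) * ((d : ℝ) : EReal)
          + ((∫⁻ s, ENNReal.ofReal s⁻¹ ∂μ : ℝ≥0∞) : EReal)) = ⊤ := by
        rw [EReal.top_mul_of_pos (by exact_mod_cast hd0), EReal.coe_add_top]
        exact EReal.top_add_of_ne_bot (EReal.coe_ennreal_ne_bot _)
      rw [htarget]
      apply irbv_ereal_top
      intro M
      have hlow : Tendsto (fun t : ℝ => (a + b*(t-1) + c*(t-1)^2) + d*(t-1)^2 * t⁻¹)
          (𝓝[>] (0:ℝ)) atTop := by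
        apply Tendsto.add_atTop hg
        apply Tendsto.pos_mul_atTop hd0 ?_ tendsto_inv_nhdsGT_zero
        have hc : ContinuousAt (fun t : ℝ => d*(t-1)^2) 0 := by fun_prop
        have h : Tendsto (fun t : ℝ => d*(t-1)^2) (𝓝[>] (0:ℝ)) (𝓝 (d*((0:ℝ)-1)^2)) :=
          hc.tendsto.mono_left nhdsWithin_le_nhds
        norm_num at h
        exact h
      filter_upwards [hlow.eventually (eventually_gt_atTop M), self_mem_nhdsWithin]
        with t hMt ht
      rw [hf t ht]
      have hI := irbv_I_nonneg hsupp (show (0:ℝ) < t from ht)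
      have heq : d*((t-1)^2/t) = d*(t-1)^2*t⁻¹ := by
        rw [div_eq_mul_inv]; ring
      linarith
    · -- d = 0
      subst hd0
      have hLcoe : ((∫⁻ s, ENNReal.ofReal s⁻¹ ∂μ : ℝ≥0∞) : EReal)
          = (((∫⁻ s, ENNReal.ofReal s⁻¹ ∂μ).toReal : ℝ) : EReal) := by
        conv_lhs => rw [← ENNReal.ofReal_toReal hLfin.ne]
        rw [EReal.coe_ennreal_ofReal, max_eq_left ENNReal.toReal_nonneg]
      have htarget : (((a - b + c : ℝ) : EReal) + (⊤ : EReal) * ((0 : ℝ) : EReal)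
          + ((∫⁻ s, ENNReal.ofReal s⁻¹ ∂μ : ℝ≥0∞) : EReal))
          = (((a - b + c) + (∫⁻ s, ENNReal.ofReal s⁻¹ ∂μ).toReal : ℝ) : EReal) := by
        rw [EReal.coe_zero, mul_zero, add_zero, hLcoe, ← EReal.coe_add]
      rw [htarget, EReal.tendsto_coe]
      have hbound_int : Integrable (fun s : ℝ => s⁻¹) μ :=
        ⟨measurable_inv.aestronglyMeasurable,
          (hasFiniteIntegral_iff_ofReal
            ((irbv_ae_pos hsupp).mono fun s hs => inv_nonneg.mpr hs.le)).mpr hLfin⟩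
      have hI : Tendsto (fun t : ℝ => ∫ s, (t-1)^2/(t+s) ∂μ) (𝓝[>] (0:ℝ))
          (𝓝 (∫ s, s⁻¹ ∂μ)) := by
        apply tendsto_integral_filter_of_dominated_convergence (fun s : ℝ => s⁻¹)
        · exact Eventually.of_forall fun t => (irbv_meas t).aestronglyMeasurable
        · filter_upwards [Ioc_mem_nhdsGT_of_mem
            (show (0:ℝ) ∈ Set.Ico 0 1 from ⟨le_refl 0, one_pos⟩)] with t ht
          filter_upwards [irbv_ae_pos hsupp] with s hs
          have ht0 : 0 < t := ht.1
          rw [Real.norm_eq_abs, abs_of_nonneg (by positivity)]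
          have h1 : (t-1)^2 ≤ 1 := by nlinarith [ht.2]
          calc (t-1)^2/(t+s) ≤ 1/s := div_le_div₀ zero_le_one h1 hs (by linarith)
            _ = s⁻¹ := one_div s
        · exact hbound_int
        · filter_upwards [irbv_ae_pos hsupp] with s hs
          have hcont : ContinuousAt (fun t : ℝ => (t-1)^2/(t+s)) 0 := by
            apply ContinuousAt.div (by fun_prop) (by fun_prop)
            simpa using hs.ne'
          have h : Tendsto (fun t : ℝ => (t-1)^2/(t+s)) (𝓝[>] (0:ℝ))
              (𝓝 (((0:ℝ)-1)^2/((0:ℝ)+s))) :=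
            hcont.tendsto.mono_left nhdsWithin_le_nhds
          have hval : ((0:ℝ)-1)^2/((0:ℝ)+s) = s⁻¹ := by
            rw [zero_add]
            norm_num
          rwa [hval] at h
      have hIval : ∫ s, s⁻¹ ∂μ = (∫⁻ s, ENNReal.ofReal s⁻¹ ∂μ).toReal :=
        integral_eq_lintegral_of_nonneg_ae
          ((irbv_ae_pos hsupp).mono fun s hs => inv_nonneg.mpr hs.le)
          measurable_inv.aestronglyMeasurable
      rw [hIval] at hI
      refine (hg.add hI).congr' ?_
      filter_upwards [self_mem_nhdsWithin] with t ht
      rw [hf t ht]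
      ring
lemma irbv_part2 (a b c d : ℝ) (hc : 0 ≤ c) (hd : 0 ≤ d)
    (μ : Measure ℝ) (hsupp : μ (Set.Iic 0) = 0)
    (hμ : (∫⁻ s, ENNReal.ofReal (1 / (1 + s)) ∂μ) < ⊤)
    (f : ℝ → ℝ)
    (hf : ∀ t ∈ Set.Ioi (0 : ℝ),
      f t = a + b * (t - 1) + c * (t - 1) ^ 2 + d * ((t - 1) ^ 2 / t)
        + ∫ s, (t - 1) ^ 2 / (t + s) ∂μ) :
    Tendsto (fun t : ℝ => ((f t / t : ℝ) : EReal)) atTop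
      (nhds (((b + d : ℝ) : EReal) + (⊤ : EReal) * ((c : ℝ) : EReal)
        + ((μ (Set.Ioi 0) : ℝ≥0∞) : EReal))) := by
  have h1 : Tendsto (fun t : ℝ => (a + b*(t-1))/t) atTop (𝓝 b) := by
    have h := ((tendsto_const_nhds (x := a)).mul tendsto_inv_atTop_zero).add
      ((tendsto_const_nhds (x := b)).mul
        ((tendsto_const_nhds (x := (1:ℝ))).sub tendsto_inv_atTop_zero))
    rw [show a * 0 + b * (1 - 0) = b from by ring] at h
    refine h.congr' ?_
    filter_upwards [eventually_ge_atTop 1] with t ht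
    have ht0 : t ≠ 0 := by intro h0; rw [h0] at ht; linarith
    field_simp
  have huniv : μ Set.univ = μ (Set.Ioi 0) := by
    rw [← measure_add_measure_compl (measurableSet_Iic (a := (0:ℝ))), hsupp, zero_add,
      compl_Iic]
  have hinv : Tendsto (fun t : ℝ => 1 - t⁻¹) atTop (𝓝 1) := by
    have h := (tendsto_const_nhds (x := (1:ℝ))).sub tendsto_inv_atTop_zero
    rwa [sub_zero] at h
  rcases eq_top_or_lt_top (μ (Set.Ioi 0)) with hmtop | hmfin
  · -- infinite total mass
    have htarget : (((b + d : ℝ) : EReal) + (⊤ : EReal) * ((c : ℝ) : EReal)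
        + ((μ (Set.Ioi 0) : ℝ≥0∞) : EReal)) = ⊤ := by
      rw [hmtop, EReal.coe_ennreal_top]
      apply EReal.add_top_of_ne_bot
      rcases hc.lt_or_eq with h | h
      · rw [EReal.top_mul_of_pos (by exact_mod_cast h), EReal.coe_add_top]
        simp
      · rw [← h, EReal.coe_zero, mul_zero, add_zero]
        exact EReal.coe_ne_bot _
    rw [htarget]
    apply irbv_ereal_top
    have hUnion : Set.Ioi (0:ℝ) = ⋃ n : ℕ, Set.Ioc (0:ℝ) (n:ℝ) := by
      ext x
      simp only [Set.mem_Ioi, Set.mem_iUnion, Set.mem_Ioc]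
      constructor
      · intro hx
        obtain ⟨n, hn⟩ := exists_nat_ge x
        exact ⟨n, hx, hn⟩
      · rintro ⟨n, hx, -⟩
        exact hx
    have hdir : Directed (· ⊆ ·) (fun n : ℕ => Set.Ioc (0:ℝ) (n:ℝ)) :=
      Monotone.directed_le fun n m hnm =>
        Set.Ioc_subset_Ioc le_rfl (by exact_mod_cast Nat.cast_le.mpr hnm)
    have hsupm : ⨆ n : ℕ, μ (Set.Ioc (0:ℝ) (n:ℝ)) = ⊤ := by
      rw [← hdir.measure_iUnion, ← hUnion, hmtop]
    intro M
    set Q : ℝ := max (M - (b - 1) + 1) 1 with hQdef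
    have hQ0 : 0 < Q := lt_of_lt_of_le one_pos (le_max_right _ _)
    obtain ⟨n, hn⟩ : ∃ n : ℕ, ENNReal.ofReal (2*Q) < μ (Set.Ioc (0:ℝ) (n:ℝ)) := by
      rw [← lt_iSup_iff, hsupm]
      exact ENNReal.ofReal_lt_top
    have hnfin : μ (Set.Ioc (0:ℝ) (n:ℝ)) < ⊤ := irbv_finite_Ioc hμ (Nat.cast_nonneg n)
    have hnval : 2*Q ≤ (μ (Set.Ioc (0:ℝ) (n:ℝ))).toReal := by
      have h := ENNReal.toReal_mono hnfin.ne hn.le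
      rwa [ENNReal.toReal_ofReal (by positivity)] at h
    filter_upwards [eventually_ge_atTop (max 4 (9*(n:ℝ))),
      h1.eventually_const_lt (show b - 1 < b by linarith)] with t ht hbt
    have ht4 : (4:ℝ) ≤ t := le_trans (le_max_left _ _) ht
    have htn : 9*(n:ℝ) ≤ t := le_trans (le_max_right _ _) ht
    have ht0 : (0:ℝ) < t := by linarith
    have hJ : ENNReal.ofReal (t/2) * μ (Set.Ioc (0:ℝ) (n:ℝ))
        ≤ ∫⁻ s, ENNReal.ofReal ((t-1)^2/(t+s)) ∂μ := by
      rw [← setLIntegral_const]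
      refine le_trans (setLIntegral_mono (ENNReal.measurable_ofReal.comp (irbv_meas t))
        fun s hs => ?_) (setLIntegral_le_lintegral _ _)
      apply ENNReal.ofReal_le_ofReal
      obtain ⟨hs0, hsn⟩ := hs
      rw [div_le_div_iff₀ (by norm_num : (0:ℝ) < 2) (by linarith : (0:ℝ) < t + s)]
      nlinarith [Nat.cast_nonneg (α := ℝ) n]
    have hIt : (t/2) * (μ (Set.Ioc (0:ℝ) (n:ℝ))).toReal ≤ ∫ s, (t-1)^2/(t+s) ∂μ := by
      rw [irbv_I_eq hsupp ht0]
      have h := ENNReal.toReal_mono (irbv_integrable hsupp hμ ht0).lintegral_lt_top.ne hJ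
      rwa [ENNReal.toReal_mul, ENNReal.toReal_ofReal (by positivity)] at h
    rw [hf t ht0]
    have hcterm : 0 ≤ c*(t-1)^2 := by positivity
    have hdterm : 0 ≤ d*((t-1)^2/t) := by positivity
    have hY : Q ≤ (c*(t-1)^2 + d*((t-1)^2/t) + ∫ s, (t-1)^2/(t+s) ∂μ)/t := by
      rw [le_div_iff₀ ht0]
      nlinarith [hIt, hnval]
    have hsplit2 : (a + b*(t-1) + c*(t-1)^2 + d*((t-1)^2/t) + ∫ s, (t-1)^2/(t+s) ∂μ)/t
        = (a + b*(t-1))/t + (c*(t-1)^2 + d*((t-1)^2/t) + ∫ s, (t-1)^2/(t+s) ∂μ)/t := by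
      rw [← add_div]
      congr 1
      ring
    rw [hsplit2]
    have hQM : M - (b-1) + 1 ≤ Q := le_max_left _ _
    linarith
  · haveI : IsFiniteMeasure μ := ⟨by rw [huniv]; exact hmfin⟩
    rcases hc.lt_or_eq with hc0 | hc0
    · -- c > 0
      have htarget : (((b + d : ℝ) : EReal) + (⊤ : EReal) * ((c : ℝ) : EReal)
          + ((μ (Set.Ioi 0) : ℝ≥0∞) : EReal)) = ⊤ := by
        rw [EReal.top_mul_of_pos (by exact_mod_cast hc0), EReal.coe_add_top]
        exact EReal.top_add_of_ne_bot (EReal.coe_ennreal_ne_bot _)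
      rw [htarget]
      apply irbv_ereal_top
      have hlin : Tendsto (fun t : ℝ => c*(t + (-2))) atTop atTop :=
        Tendsto.const_mul_atTop hc0 (tendsto_atTop_add_const_right atTop (-2) tendsto_id)
      have hlow : Tendsto (fun t : ℝ => (a + b*(t-1))/t + c*(t + (-2))) atTop atTop :=
        Tendsto.add_atTop h1 hlin
      intro M
      filter_upwards [hlow.eventually (eventually_gt_atTop M), eventually_ge_atTop 1]
        with t hMt ht1
      have ht0 : (0:ℝ) < t := by linarith
      rw [hf t ht0]
      have hI := irbv_I_nonneg hsupp ht0
      have hdt : 0 ≤ d*((t-1)^2/t) := by positivity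
      have hct : c*(t + (-2)) ≤ c*(t-1)^2/t := by
        rw [le_div_iff₀ ht0]
        nlinarith [mul_le_mul_of_nonneg_left (show t*(t-2) ≤ (t-1)^2 from by nlinarith) hc]
      have hsplit2 : (a + b*(t-1) + c*(t-1)^2 + d*((t-1)^2/t) + ∫ s, (t-1)^2/(t+s) ∂μ)/t
          = (a + b*(t-1))/t + c*(t-1)^2/t
            + (d*((t-1)^2/t) + ∫ s, (t-1)^2/(t+s) ∂μ)/t := by
        rw [← add_div, ← add_div]
        congr 1
        ring
      rw [hsplit2]
      have hrest : 0 ≤ (d*((t-1)^2/t) + ∫ s, (t-1)^2/(t+s) ∂μ)/t :=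
        div_nonneg (add_nonneg hdt hI) ht0.le
      linarith
    · -- c = 0
      subst hc0
      have hmcoe : ((μ (Set.Ioi 0) : ℝ≥0∞) : EReal)
          = (((μ (Set.Ioi 0)).toReal : ℝ) : EReal) := by
        conv_lhs => rw [← ENNReal.ofReal_toReal hmfin.ne]
        rw [EReal.coe_ennreal_ofReal, max_eq_left ENNReal.toReal_nonneg]
      have htarget : (((b + d : ℝ) : EReal) + (⊤ : EReal) * ((0 : ℝ) : EReal)
          + ((μ (Set.Ioi 0) : ℝ≥0∞) : EReal))
          = (((b + d) + (μ (Set.Ioi 0)).toReal : ℝ) : EReal) := by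
        rw [EReal.coe_zero, mul_zero, add_zero, hmcoe, ← EReal.coe_add]
      rw [htarget, EReal.tendsto_coe]
      have hDCT : Tendsto (fun t : ℝ => ∫ s, (t-1)^2/(t*(t+s)) ∂μ) atTop
          (𝓝 (∫ s, (1:ℝ) ∂μ)) := by
        apply tendsto_integral_filter_of_dominated_convergence (fun _ : ℝ => (1:ℝ))
        · exact Eventually.of_forall fun t =>
            (measurable_const.div
              (measurable_const.mul (measurable_const.add measurable_id))).aestronglyMeasurable
        · filter_upwards [eventually_ge_atTop 1] with t ht
          filter_upwards [irbv_ae_pos hsupp] with s hs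
          have ht0 : (0:ℝ) < t := by linarith
          rw [Real.norm_eq_abs, abs_of_nonneg (by positivity),
            div_le_one (by positivity)]
          nlinarith
        · exact integrable_const 1
        · filter_upwards [irbv_ae_pos hsupp] with s hs
          have hfrac : Tendsto (fun t : ℝ => (1+s)/(t+s)) atTop (𝓝 0) :=
            tendsto_const_nhds.div_atTop (tendsto_atTop_add_const_right atTop s tendsto_id)
          have hfrac2 : Tendsto (fun t : ℝ => (t-1)/(t+s)) atTop (𝓝 1) := by
            have h := (tendsto_const_nhds (x := (1:ℝ))).sub hfrac
            rw [sub_zero] at h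
            refine h.congr' ?_
            filter_upwards [eventually_ge_atTop 1] with t ht
            have hts : t + s ≠ 0 := by positivity
            rw [eq_div_iff hts, sub_mul, div_mul_cancel₀ _ hts]
            ring
          have h := hinv.mul hfrac2
          rw [one_mul] at h
          refine h.congr' ?_
          filter_upwards [eventually_ge_atTop 1] with t ht
          have ht0 : t ≠ 0 := by intro h0; rw [h0] at ht; linarith
          have hts : t + s ≠ 0 := by positivity
          have e1 : (1:ℝ) - t⁻¹ = (t-1)/t := by
            rw [eq_div_iff ht0, sub_mul, inv_mul_cancel₀ ht0]
            ring
          show (1 - t⁻¹) * ((t-1)/(t+s)) = (t-1)^2/(t*(t+s))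
          rw [e1, div_mul_div_comm]
          congr 1
          ring
      have hval : ∫ s, (1:ℝ) ∂μ = (μ (Set.Ioi 0)).toReal := by
        rw [integral_const, smul_eq_mul, mul_one, measureReal_def, huniv]
      rw [hval] at hDCT
      have h0 : Tendsto (fun t : ℝ => a * t⁻¹) atTop (𝓝 0) := by
        have h := (tendsto_const_nhds (x := a)).mul tendsto_inv_atTop_zero
        rwa [mul_zero] at h
      have hb2 : Tendsto (fun t : ℝ => b*(1 - t⁻¹)) atTop (𝓝 b) := by
        have h := (tendsto_const_nhds (x := b)).mul hinv
        rwa [mul_one] at h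
      have hd2 : Tendsto (fun t : ℝ => d*(1 - t⁻¹)^2) atTop (𝓝 d) := by
        have h := (tendsto_const_nhds (x := d)).mul (hinv.pow 2)
        rwa [one_pow, mul_one] at h
      have total := ((h0.add hb2).add hd2).add hDCT
      rw [show (0:ℝ) + b + d + (μ (Set.Ioi 0)).toReal
        = (b + d) + (μ (Set.Ioi 0)).toReal from by ring] at total
      refine total.congr' ?_
      filter_upwards [eventually_ge_atTop 1] with t ht
      have ht0 : (0:ℝ) < t := by linarith
      have hint : ∫ s, (t-1)^2/(t*(t+s)) ∂μ = (∫ s, (t-1)^2/(t+s) ∂μ) * t⁻¹ := by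
        rw [← integral_mul_const]
        apply integral_congr_ae
        filter_upwards with s
        rw [mul_comm t (t+s), ← div_div, ← div_eq_mul_inv]
      have htne : t ≠ 0 := ht0.ne'
      rw [hf t ht0]
      rw [hint]
      field_simp
      try ring

/-- Boundary values of the integral representation of an operator convex function:
if `f(t) = a + b(t−1) + c(t−1)² + d(t−1)²/t + ∫_{(0,∞)} (t−1)²/(t+s) dμ(s)` with
`c, d ≥ 0` and `∫ 1/(1+s) dμ(s) < ∞`, then
`f(0⁺) = a − b + c + (+∞)·d + ∫ s⁻¹ dμ(s)` and
`f'(∞) = b + (+∞)·c + d + μ((0,∞))` in `(-∞,+∞]` (with `(+∞)·0 = 0`). -/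
theorem integral_repr_boundary_values
    (a b c d : ℝ) (hc : 0 ≤ c) (hd : 0 ≤ d)
    (μ : Measure ℝ) (hsupp : μ (Set.Iic 0) = 0)
    (hμ : (∫⁻ s, ENNReal.ofReal (1 / (1 + s)) ∂μ) < ⊤)
    (f : ℝ → ℝ)
    (hf : ∀ t ∈ Set.Ioi (0 : ℝ),
      f t = a + b * (t - 1) + c * (t - 1) ^ 2 + d * ((t - 1) ^ 2 / t)
        + ∫ s, (t - 1) ^ 2 / (t + s) ∂μ) :
    Tendsto (fun t : ℝ => (f t : EReal)) (nhdsWithin 0 (Set.Ioi 0))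
      (nhds (((a - b + c : ℝ) : EReal) + (⊤ : EReal) * ((d : ℝ) : EReal)
        + ((∫⁻ s, ENNReal.ofReal s⁻¹ ∂μ : ℝ≥0∞) : EReal))) ∧
    Tendsto (fun t : ℝ => ((f t / t : ℝ) : EReal)) atTop
      (nhds (((b + d : ℝ) : EReal) + (⊤ : EReal) * ((c : ℝ) : EReal)
        + ((μ (Set.Ioi 0) : ℝ≥0∞) : EReal))) :=
  ⟨irbv_part1 a b c d hd μ hsupp hμ f hf, irbv_part2 a b c d hc hd μ hsupp hμ f hf⟩
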